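/- Let λ_{(1)} < … < λ_{(N)} be real numbers, b ∈ ℝ, and let μ_N = (1/(N−1)) Σ_{k=1}^{N−1} δ_{λ_{(N)} − λ_{(k)}} and μ^{(N)} = (1/N) Σ_{k=1}^N δ_{λ_{(k)}}. Then the bounded-Lipschitz distance satisfies d(μ_N, τ_b μ^{(N)}) ≤ |λ_{(N)} − b| + 2/N, where τ_b μ^{(N)} is the pushforward of μ^{(N)} by x ↦ b − x. -/

import Mathlib

open MeasureTheory

/-- Bounded-Lipschitz distance. -/
noncomputable def blDist (μ ν : Measure ℝ) : ℝ :=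
  ⨆ f : {f : ℝ → ℝ // LipschitzWith 1 f ∧ ∀ x, |f x| ≤ 1},
    |∫ x, f.1 x ∂μ - ∫ x, f.1 x ∂ν|

theorem aux_int (M : ℕ) (c : ℝ → ℝ) (hc : Measurable c) (x : Fin M → ℝ) (e : ENNReal) :
    ∫ y, c y ∂(e • ∑ k : Fin M, Measure.dirac (x k)) = e.toReal * ∑ k, c (x k) := by
  rw [integral_smul_measure, integral_finset_sum_measure (fun i _ => ?_)]
  · simp [integral_dirac' _ _ hc.stronglyMeasurable]
  · refine ⟨hc.stronglyMeasurable.aestronglyMeasurable, ?_⟩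
    rw [HasFiniteIntegral, lintegral_dirac' _ (by fun_prop)]
    exact ENNReal.coe_lt_top


theorem aux2 (m : ℕ) (A B c d : ℝ) (hd : 0 ≤ d) (hAB : |A - B| ≤ ((m:ℝ)+1) * d)
    (hB : |B| ≤ (m:ℝ)+1) (hc : |c| ≤ 1) :
    |((m:ℝ)+1)⁻¹ * A - ((m:ℝ)+2)⁻¹ * (B + c)| ≤ d + 2/((m:ℝ)+2) := by
  have hn1 : (0:ℝ) < (m:ℝ)+1 := by positivity
  have hn2 : (0:ℝ) < (m:ℝ)+2 := by positivity
  have e : ((m:ℝ)+1)⁻¹ * A - ((m:ℝ)+2)⁻¹ * (B + c)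
      = ((m:ℝ)+1)⁻¹ * (A - B) + ((((m:ℝ)+1)⁻¹ - ((m:ℝ)+2)⁻¹) * B - ((m:ℝ)+2)⁻¹ * c) := by
    ring
  rw [e]
  have hig : (0:ℝ) < ((m:ℝ)+1)⁻¹ - ((m:ℝ)+2)⁻¹ := by
    rw [sub_pos]
    exact inv_strictAnti₀ hn1 (by linarith)
  have b1 : |((m:ℝ)+1)⁻¹ * (A - B)| ≤ d := by
    rw [abs_mul, abs_of_pos (by positivity : (0:ℝ) < ((m:ℝ)+1)⁻¹)]
    rw [inv_mul_le_iff₀ hn1]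
    exact hAB
  have b2 : |(((m:ℝ)+1)⁻¹ - ((m:ℝ)+2)⁻¹) * B| ≤ 1/((m:ℝ)+2) := by
    rw [abs_mul, abs_of_pos hig]
    calc (((m:ℝ)+1)⁻¹ - ((m:ℝ)+2)⁻¹) * |B| ≤ (((m:ℝ)+1)⁻¹ - ((m:ℝ)+2)⁻¹) * ((m:ℝ)+1) := by
          exact mul_le_mul_of_nonneg_left hB hig.le
      _ = 1/((m:ℝ)+2) := by field_simp; norm_num
  have b3 : |((m:ℝ)+2)⁻¹ * c| ≤ 1/((m:ℝ)+2) := by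
    rw [abs_mul, abs_of_pos (by positivity : (0:ℝ) < ((m:ℝ)+2)⁻¹)]
    calc ((m:ℝ)+2)⁻¹ * |c| ≤ ((m:ℝ)+2)⁻¹ * 1 := by
          exact mul_le_mul_of_nonneg_left hc (by positivity)
      _ = 1/((m:ℝ)+2) := by ring
  calc |((m:ℝ)+1)⁻¹ * (A - B) + ((((m:ℝ)+1)⁻¹ - ((m:ℝ)+2)⁻¹) * B - ((m:ℝ)+2)⁻¹ * c)|
      ≤ |((m:ℝ)+1)⁻¹ * (A - B)| + |(((m:ℝ)+1)⁻¹ - ((m:ℝ)+2)⁻¹) * B - ((m:ℝ)+2)⁻¹ * c| :=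
        abs_add_le _ _
    _ ≤ |((m:ℝ)+1)⁻¹ * (A - B)| + (|(((m:ℝ)+1)⁻¹ - ((m:ℝ)+2)⁻¹) * B| + |((m:ℝ)+2)⁻¹ * c|) := by
        gcongr
        exact abs_sub _ _
    _ ≤ d + (1/((m:ℝ)+2) + 1/((m:ℝ)+2)) := by gcongr
    _ = d + 2/((m:ℝ)+2) := by ring

/-- For ordered reals `λ₍₁₎ < … < λ₍N₎` and `b ∈ ℝ`, the bounded-Lipschitz distance
between `μ_N = (N-1)⁻¹ ∑_{k<N} δ_{λ₍N₎-λ₍k₎}` and the reflection by `x ↦ b - x` of the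
empirical measure `μ^{(N)} = N⁻¹ ∑_k δ_{λ₍k₎}` is at most `|λ₍N₎ - b| + 2/N`. -/
theorem stmt12 (N : ℕ) (hN : 2 ≤ N) (lam : Fin N → ℝ) (hmono : StrictMono lam)
    (b : ℝ) :
    blDist
      (((N : ENNReal) - 1)⁻¹ •
        ∑ k : Fin (N - 1),
          Measure.dirac (lam ⟨N - 1, by omega⟩ - lam (Fin.castLE (by omega) k)))
      ((((N : ENNReal))⁻¹ • ∑ k : Fin N, Measure.dirac (lam k)).map fun x => b - x)
      ≤ |lam ⟨N - 1, by omega⟩ - b| + 2 / N := by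
  obtain ⟨M, rfl⟩ : ∃ M, N = M + 2 := ⟨N - 2, by omega⟩
  set Λ : ℝ := lam ⟨M + 1, by omega⟩ with hΛ
  haveI : Nonempty { f : ℝ → ℝ // LipschitzWith 1 f ∧ ∀ x, |f x| ≤ 1 } :=
    ⟨⟨fun _ => 0, LipschitzWith.const' 0, fun x => by simp⟩⟩
  apply ciSup_le
  rintro ⟨f, hf, hfb⟩
  have hmeas : Measurable f := hf.continuous.measurable
  rw [integral_map (by fun_prop) hmeas.stronglyMeasurable.aestronglyMeasurable]
  rw [show (∫ x, f x ∂(((↑(M+2) : ENNReal) - 1)⁻¹ •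
        ∑ k : Fin (M + 2 - 1),
          Measure.dirac (lam ⟨M + 2 - 1, by omega⟩ - lam (Fin.castLE (by omega) k))))
      = (((↑(M+2) : ENNReal) - 1)⁻¹).toReal *
        ∑ k : Fin (M + 1), f (Λ - lam (Fin.castLE (by omega) k))
    from aux_int _ f hmeas _ _]
  rw [show (∫ x, f (b - x) ∂(((↑(M+2) : ENNReal))⁻¹ • ∑ k : Fin (M+2), Measure.dirac (lam k)))
      = (((↑(M+2) : ENNReal))⁻¹).toReal * ∑ k : Fin (M+2), f (b - lam k)
    from aux_int _ (fun x => f (b - x)) (by fun_prop) _ _]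
  have h1 : ((↑(M+2) : ENNReal) - 1)⁻¹.toReal = ((M:ℝ) + 1)⁻¹ := by
    rw [show ((↑(M+2) : ENNReal)) - 1 = ((M+1 : ℕ) : ENNReal) by
      rw [← Nat.cast_one (R := ENNReal), ← ENNReal.natCast_sub]; norm_num]
    rw [ENNReal.toReal_inv]
    push_cast
    rfl
  have h2 : ((↑(M+2) : ENNReal))⁻¹.toReal = ((M:ℝ) + 2)⁻¹ := by
    rw [ENNReal.toReal_inv]; push_cast; rfl
  rw [h1, h2]
  have hsplit : (∑ k : Fin (M+2), f (b - lam k))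
      = (∑ k : Fin (M+1), f (b - lam (Fin.castLE (by omega : M+1 ≤ M+2) k))) + f (b - Λ) :=
    Fin.sum_univ_castSucc (fun k : Fin (M+2) => f (b - lam k))
  rw [hsplit]
  have key : ∀ k : Fin (M+1),
      |f (Λ - lam (Fin.castLE (by omega : M+1 ≤ M+2) k)) -
        f (b - lam (Fin.castLE (by omega : M+1 ≤ M+2) k))| ≤ |Λ - b| := by
    intro k
    have := hf.dist_le_mul (Λ - lam (Fin.castLE (by omega : M+1 ≤ M+2) k))
      (b - lam (Fin.castLE (by omega : M+1 ≤ M+2) k))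
    simpa [Real.dist_eq, sub_sub_sub_cancel_right] using this
  have hAB : |(∑ k : Fin (M+1), f (Λ - lam (Fin.castLE (by omega : M+1 ≤ M+2) k))) -
      ∑ k : Fin (M+1), f (b - lam (Fin.castLE (by omega : M+1 ≤ M+2) k))|
      ≤ ((M:ℝ)+1) * |Λ - b| := by
    rw [← Finset.sum_sub_distrib]
    calc _ ≤ ∑ k : Fin (M+1), |f (Λ - lam (Fin.castLE (by omega : M+1 ≤ M+2) k)) -
          f (b - lam (Fin.castLE (by omega : M+1 ≤ M+2) k))| := Finset.abs_sum_le_sum_abs _ _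
      _ ≤ ∑ _k : Fin (M+1), |Λ - b| := Finset.sum_le_sum (fun k _ => key k)
      _ = ((M:ℝ)+1) * |Λ - b| := by
          rw [Finset.sum_const, Finset.card_univ, Fintype.card_fin, nsmul_eq_mul]
          push_cast; ring
  have hB : |∑ k : Fin (M+1), f (b - lam (Fin.castLE (by omega : M+1 ≤ M+2) k))|
      ≤ (M:ℝ)+1 := by
    calc _ ≤ ∑ k : Fin (M+1), |f (b - lam (Fin.castLE (by omega : M+1 ≤ M+2) k))| :=
          Finset.abs_sum_le_sum_abs _ _
      _ ≤ ∑ _k : Fin (M+1), (1:ℝ) := Finset.sum_le_sum (fun k _ => hfb _)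
      _ = (M:ℝ)+1 := by simp
  have := aux2 M _ _ (f (b - Λ)) |Λ - b| (abs_nonneg _) hAB hB (hfb _)
  convert this using 2
  all_goals (push_cast; try ring)
  all_goals rfl
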